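/- Let p be an odd prime and let d be the multiplicative order of 2 modulo p. For the length-k Cunningham chain pattern of the first kind f_i(x) = 2^{i-1}·x + (2^{i-1} - 1), the number of residues x mod p forbidden by the pattern (i.e., residues x such that p divides some f_i(x)) is exactly min(k, d). -/

import Mathlib

/- For an odd prime `p` with `d` the multiplicative order of `2` mod `p`,
the length-`k` Cunningham chain pattern of the first kind forbids exactly
`min k d` residues mod `p`. -/
open Classical in
theorem cunningham_forbidden_count (p : ℕ) [Fact p.Prime] (hodd : p ≠ 2)
    (k : ℕ) (hk : 1 ≤ k) (d : ℕ) (hd : d = orderOf (2 : ZMod p)) :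
    ((Finset.univ : Finset (ZMod p)).filter (fun x =>
      ∃ i ∈ Finset.Icc 1 k,
        (2 : ZMod p) ^ (i - 1) * x + ((2 : ZMod p) ^ (i - 1) - 1) = 0)).card
      = min k d := by
  have hp : p.Prime := Fact.out
  have h2 : (2 : ZMod p) ≠ 0 := by
    intro h
    have h' : ((2 : ℕ) : ZMod p) = 0 := by exact_mod_cast h
    rw [ZMod.natCast_eq_zero_iff] at h'
    exact hodd ((Nat.prime_dvd_prime_iff_eq hp Nat.prime_two).mp h')
  set c : ZMod p := (2 : ZMod p)⁻¹ with hc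
  have hcne : c ≠ 0 := inv_ne_zero h2
  have hfin : IsOfFinOrder (2 : ZMod p) :=
    isOfFinOrder_iff_pow_eq_one.mpr
      ⟨p - 1, Nat.sub_pos_of_lt hp.one_lt, ZMod.pow_card_sub_one_eq_one h2⟩
  have hcp0 : ∀ j : ℕ, (2 : ZMod p) ^ j * c ^ j = 1 := by
    intro j
    rw [hc, ← mul_pow, mul_inv_cancel₀ h2, one_pow]
  have hco : orderOf c = d := by
    rw [hd]
    refine orderOf_eq_orderOf_iff.mpr fun n => ⟨fun h => ?_, fun h => ?_⟩
    · have := hcp0 n; rw [h, mul_one] at this; exact this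
    · have := hcp0 n; rw [h, one_mul] at this; exact this
  have hdpos : 0 < d := by rw [hd]; exact hfin.orderOf_pos
  have hcp : ∀ j : ℕ, (2 : ZMod p) ^ j * c ^ j = 1 := by
    intro j
    rw [hc, ← mul_pow, mul_inv_cancel₀ h2, one_pow]
  have hset : ((Finset.univ : Finset (ZMod p)).filter (fun x =>
      ∃ i ∈ Finset.Icc 1 k,
        (2 : ZMod p) ^ (i - 1) * x + ((2 : ZMod p) ^ (i - 1) - 1) = 0))
      = (Finset.range k).image (fun j => c ^ j - 1) := by
    ext x
    simp only [Finset.mem_filter, Finset.mem_univ, true_and, Finset.mem_image,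
      Finset.mem_range, Finset.mem_Icc]
    constructor
    · rintro ⟨i, ⟨hi1, hik⟩, heq⟩
      refine ⟨i - 1, by omega, ?_⟩
      linear_combination -(c ^ (i-1)) * heq + (x + 1) * hcp (i - 1)
    · rintro ⟨j, hj, rfl⟩
      refine ⟨j + 1, ⟨by omega, by omega⟩, ?_⟩
      simp only [Nat.add_sub_cancel]
      linear_combination hcp j
  rw [hset]
  have key : ∀ i j : ℕ, i ≤ j → j < d → c ^ i = c ^ j → i = j := by
    intro i j hle hj hcij
    have hji : c ^ (j - i) * c ^ i = 1 * c ^ i := by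
      rw [← pow_add, Nat.sub_add_cancel hle, one_mul, ← hcij]
    have h1 := mul_right_cancel₀ (pow_ne_zero i hcne) hji
    have hdvd : d ∣ j - i := hco ▸ orderOf_dvd_of_pow_eq_one h1
    have := Nat.eq_zero_of_dvd_of_lt hdvd (by omega)
    omega
  have hinj : Set.InjOn (fun j => c ^ j - 1) ((Finset.range (min k d)) : Set ℕ) := by
    intro i hi j hj hij
    simp only [Finset.coe_range, Set.mem_Iio] at hi hj
    have hpow : c ^ i = c ^ j := by
      have := congrArg (· + 1) hij
      simpa using this
    rcases le_total i j with h | h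
    · exact key i j h (by omega) hpow
    · exact (key j i h (by omega) hpow.symm).symm
  have himg : (Finset.range k).image (fun j => c ^ j - 1)
      = (Finset.range (min k d)).image (fun j => c ^ j - 1) := by
    apply Finset.Subset.antisymm
    · intro x hx
      simp only [Finset.mem_image, Finset.mem_range] at hx ⊢
      obtain ⟨j, hj, rfl⟩ := hx
      refine ⟨j % d, ?_, ?_⟩
      · have h1 := Nat.mod_lt j hdpos
        have h2' := Nat.mod_le j d
        omega
      · rw [← hco, pow_mod_orderOf]
    · exact Finset.image_subset_image (by simp [Finset.range_subset]; exact fun x hx _ => hx)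
  rw [himg, Finset.card_image_of_injOn hinj, Finset.card_range]
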